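/- arXiv:1203.3706 — 2 statements merged into one kernel-verified Lean document; each statement's English description precedes it below -/
import Mathlib

section
/- Let f be a QLTL formula in negation normal form and Occ(f₁), Occ(f₂) two positive-polarity subformula occurrences of f such that Eq(Occ(f₁),Occ(f₂)) holds, where Eq is the reflexive-symmetric-transitive closure of the relation Eq₀ generated by: Occ(f₂) is a superformula occurrence of Occ(f₁) and f₂ has one of the forms f₁ ∨ Z, A U f₁, A W f₁, f₁ W FALSE, or X f₁. Then f[Occ(f₁) ← TRUE] is logically equivalent to f[Occ(f₂) ← TRUE]. -/
/- QLTL in negation normal form: LTL with propositional quantifiers. Subformula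
occurrences are represented by one-hole contexts (all contexts are positive since
the syntax is in NNF). -/

inductive QLTL (P : Type) : Type
  | tt : QLTL P
  | ff : QLTL P
  | var : P → QLTL P
  | nvar : P → QLTL P
  | and : QLTL P → QLTL P → QLTL P
  | or : QLTL P → QLTL P → QLTL P
  | next : QLTL P → QLTL P
  | unt : QLTL P → QLTL P → QLTL P
  | wunt : QLTL P → QLTL P → QLTL P
  | ex : P → QLTL P → QLTL P
  | all : P → QLTL P → QLTL P

/-- `M'` differs from `M` solely at the instances of `p`. -/
def DiffOnly {P : Type} (M M' : ℕ → Set P) (p : P) : Prop :=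
  ∀ q, q ≠ p → ∀ j, (q ∈ M' j ↔ q ∈ M j)

def QSat {P : Type} : (ℕ → Set P) → QLTL P → ℕ → Prop
  | _, .tt, _ => True
  | _, .ff, _ => False
  | M, .var p, i => p ∈ M i
  | M, .nvar p, i => p ∉ M i
  | M, .and a b, i => QSat M a i ∧ QSat M b i
  | M, .or a b, i => QSat M a i ∨ QSat M b i
  | M, .next a, i => QSat M a (i + 1)
  | M, .unt a b, i => ∃ j, i ≤ j ∧ QSat M b j ∧ ∀ k, i ≤ k → k < j → QSat M a k
  | M, .wunt a b, i =>
      (∀ j, i ≤ j → QSat M a j) ∨ (∃ j, i ≤ j ∧ QSat M b j ∧ ∀ k, i ≤ k → k < j → QSat M a k)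
  | M, .ex p a, i => ∃ M', DiffOnly M M' p ∧ QSat M' a i
  | M, .all p a, i => ∀ M', DiffOnly M M' p → QSat M' a i

/-- One-hole contexts for QLTL (NNF, so every occurrence has positive polarity). -/
inductive Ctx (P : Type) : Type
  | hole : Ctx P
  | andL : Ctx P → QLTL P → Ctx P
  | andR : QLTL P → Ctx P → Ctx P
  | orL : Ctx P → QLTL P → Ctx P
  | orR : QLTL P → Ctx P → Ctx P
  | nextC : Ctx P → Ctx P
  | untL : Ctx P → QLTL P → Ctx P
  | untR : QLTL P → Ctx P → Ctx P
  | wuntL : Ctx P → QLTL P → Ctx P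
  | wuntR : QLTL P → Ctx P → Ctx P
  | exC : P → Ctx P → Ctx P
  | allC : P → Ctx P → Ctx P

def Ctx.fill {P : Type} : Ctx P → QLTL P → QLTL P
  | .hole, g => g
  | .andL c r, g => .and (c.fill g) r
  | .andR l c, g => .and l (c.fill g)
  | .orL c r, g => .or (c.fill g) r
  | .orR l c, g => .or l (c.fill g)
  | .nextC c, g => .next (c.fill g)
  | .untL c r, g => .unt (c.fill g) r
  | .untR l c, g => .unt l (c.fill g)
  | .wuntL c r, g => .wunt (c.fill g) r
  | .wuntR l c, g => .wunt l (c.fill g)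
  | .exC p c, g => .ex p (c.fill g)
  | .allC p c, g => .all p (c.fill g)

/-- Context composition: `(c.comp d).fill g = c.fill (d.fill g)`. -/
def Ctx.comp {P : Type} : Ctx P → Ctx P → Ctx P
  | .hole, d => d
  | .andL c r, d => .andL (c.comp d) r
  | .andR l c, d => .andR l (c.comp d)
  | .orL c r, d => .orL (c.comp d) r
  | .orR l c, d => .orR l (c.comp d)
  | .nextC c, d => .nextC (c.comp d)
  | .untL c r, d => .untL (c.comp d) r
  | .untR l c, d => .untR l (c.comp d)
  | .wuntL c r, d => .wuntL (c.comp d) r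
  | .wuntR l c, d => .wuntR l (c.comp d)
  | .exC p c, d => .exC p (c.comp d)
  | .allC p c, d => .allC p (c.comp d)

/-- `Eq0 c₁ c₂`: the occurrence with context `c₁` (of some `f₁`) sits immediately below
the occurrence with context `c₂` (of `f₂`), where `f₂` has one of the forms
`f₁ ∨ Z`, `A U f₁`, `A W f₁`, `f₁ W FALSE`, or `X f₁`. -/
inductive Eq0 {P : Type} : Ctx P → Ctx P → Prop
  | orZ (c : Ctx P) (Z : QLTL P) : Eq0 (c.comp (.orL .hole Z)) c
  | untR (c : Ctx P) (A : QLTL P) : Eq0 (c.comp (.untR A .hole)) c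
  | wuntR (c : Ctx P) (A : QLTL P) : Eq0 (c.comp (.wuntR A .hole)) c
  | gw (c : Ctx P) : Eq0 (c.comp (.wuntL .hole .ff)) c
  | nx (c : Ctx P) : Eq0 (c.comp (.nextC .hole)) c

/-- Reflexive-symmetric-transitive closure. -/
inductive EqClos {α : Type} (r : α → α → Prop) : α → α → Prop
  | base {a b} : r a b → EqClos r a b
  | refl (a) : EqClos r a a
  | symm {a b} : EqClos r a b → EqClos r b a
  | trans {a b c} : EqClos r a b → EqClos r b c → EqClos r a c

lemma Ctx.comp_fill {P : Type} (c d : Ctx P) (g : QLTL P) :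
    (c.comp d).fill g = c.fill (d.fill g) := by
  induction c <;> simp_all [Ctx.comp, Ctx.fill]

lemma fill_cong {P : Type} (c : Ctx P) (g g' : QLTL P)
    (h : ∀ (M : ℕ → Set P) (i : ℕ), QSat M g i ↔ QSat M g' i) :
    ∀ (M : ℕ → Set P) (i : ℕ), QSat M (c.fill g) i ↔ QSat M (c.fill g') i := by
  induction c <;> intro M i <;>
    simp only [Ctx.fill, QSat, *]

lemma eq0_equiv {P : Type} {d c : Ctx P} (h : Eq0 d c) :
    ∀ (M : ℕ → Set P) (i : ℕ), QSat M (d.fill .tt) i ↔ QSat M (c.fill .tt) i := by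
  cases h with
  | orZ c Z =>
      intro M i
      rw [Ctx.comp_fill]
      exact fill_cong c _ _ (fun M i => by simp [Ctx.fill, QSat]) M i
  | untR c A =>
      intro M i
      rw [Ctx.comp_fill]
      refine fill_cong c _ _ (fun M i => ?_) M i
      simp only [Ctx.fill, QSat, iff_true]
      exact ⟨i, le_refl i, trivial, fun k h1 h2 => absurd (lt_of_le_of_lt h1 h2) (lt_irrefl i)⟩
  | wuntR c A =>
      intro M i
      rw [Ctx.comp_fill]
      refine fill_cong c _ _ (fun M i => ?_) M i
      simp only [Ctx.fill, QSat, iff_true]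
      exact Or.inr ⟨i, le_refl i, trivial, fun k h1 h2 => absurd (lt_of_le_of_lt h1 h2) (lt_irrefl i)⟩
  | gw c =>
      intro M i
      rw [Ctx.comp_fill]
      refine fill_cong c _ _ (fun M i => ?_) M i
      simp only [Ctx.fill, QSat, iff_true]
      exact Or.inl fun j _ => trivial
  | nx c =>
      intro M i
      rw [Ctx.comp_fill]
      exact fill_cong c _ _ (fun M i => by simp [Ctx.fill, QSat]) M i

/-- If two positive occurrences `Occ(f₁)`, `Occ(f₂)` of a QLTL formula `f` are related
by `Eq`, then `f[Occ(f₁)←TRUE]` is logically equivalent to `f[Occ(f₂)←TRUE]`. -/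
theorem stmt5 {P : Type} (f f₁ f₂ : QLTL P) (c₁ c₂ : Ctx P)
    (h₁ : c₁.fill f₁ = f) (h₂ : c₂.fill f₂ = f)
    (heq : EqClos Eq0 c₁ c₂) :
    ∀ (M : ℕ → Set P) (i : ℕ), QSat M (c₁.fill .tt) i ↔ QSat M (c₂.fill .tt) i := by
  clear h₁ h₂
  induction heq with
  | refl a => intro M i; rfl
  | symm _ ih => intro M i; exact (ih M i).symm
  | trans _ _ ih1 ih2 => intro M i; exact (ih1 M i).trans (ih2 M i)
  | base h => exact eq0_equiv h
end

section
/- Every LTL formula f is equisatisfiable with the formula f' = x_f ∧ ⋀_{f''∈UCS} G(f''), where UCS is the set of definitional clauses produced by the SNF transformation (x_{ψ₁∧ψ₂}⇒x_{ψᵢ}; x_{ψ₁∨ψ₂}⇒(x_{ψ₁}∨x_{ψ₂}); x_{X ψ₁}⇒X(x_{ψ₁}); x_{ψ₁ U ψ₂}⇒(x_{ψ₂}∨(x_{ψ₁}∧X x_{ψ₁Uψ₂})) together with x_{ψ₁Uψ₂}⇒F(x_{ψ₂}); x_{ψ₁ W ψ₂}⇒(x_{ψ₂}∨(x_{ψ₁}∧X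 x_{ψ₁Wψ₂})); x_ψ⇒ψ for literals ψ), with fresh variables x_ψ for each subformula ψ of f. -/
/- LTL in negation normal form (negation only on propositional variables), with
standard semantics over linear time structures `M : ℕ → Set P`. -/

inductive LTL (P : Type) : Type
  | tt : LTL P
  | ff : LTL P
  | var : P → LTL P
  | nvar : P → LTL P
  | and : LTL P → LTL P → LTL P
  | or : LTL P → LTL P → LTL P
  | next : LTL P → LTL P
  | unt : LTL P → LTL P → LTL P   -- strong until U
  | wunt : LTL P → LTL P → LTL P  -- weak until W
  deriving DecidableEq

def Sat {P : Type} (M : ℕ → Set P) : LTL P → ℕ → Prop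
  | .tt, _ => True
  | .ff, _ => False
  | .var p, i => p ∈ M i
  | .nvar p, i => p ∉ M i
  | .and a b, i => Sat M a i ∧ Sat M b i
  | .or a b, i => Sat M a i ∨ Sat M b i
  | .next a, i => Sat M a (i + 1)
  | .unt a b, i => ∃ j, i ≤ j ∧ Sat M b j ∧ ∀ k, i ≤ k → k < j → Sat M a k
  | .wunt a b, i =>
      (∀ j, i ≤ j → Sat M a j) ∨ (∃ j, i ≤ j ∧ Sat M b j ∧ ∀ k, i ≤ k → k < j → Sat M a k)

def LTL.G {P : Type} (a : LTL P) : LTL P := .wunt a .ff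
def LTL.F {P : Type} (a : LTL P) : LTL P := .unt .tt a

def bigAnd {P : Type} (l : List (LTL P)) : LTL P := l.foldr .and .tt
def bigOr {P : Type} (l : List (LTL P)) : LTL P := l.foldr .or .ff

/- Definitional SNF transformation: fresh definitional variables `x_ψ` are indexed by
the subformulas `ψ` themselves, so formulas of the transform live over `P ⊕ LTL P`. -/

def xv {P : Type} (g : LTL P) : LTL (P ⊕ LTL P) := .var (Sum.inr g)
def nxv {P : Type} (g : LTL P) : LTL (P ⊕ LTL P) := .nvar (Sum.inr g)

/-- The set UCS of definitional clauses of the SNF transformation. -/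
def ucs {P : Type} : LTL P → List (LTL (P ⊕ LTL P))
  | .tt => [.or (nxv .tt) .tt]
  | .ff => [.or (nxv .ff) .ff]
  | .var p => [.or (nxv (.var p)) (.var (Sum.inl p))]
  | .nvar p => [.or (nxv (.nvar p)) (.nvar (Sum.inl p))]
  | .and a b => [.or (nxv (.and a b)) (xv a), .or (nxv (.and a b)) (xv b)]
      ++ ucs a ++ ucs b
  | .or a b => [.or (nxv (.or a b)) (.or (xv a) (xv b))] ++ ucs a ++ ucs b
  | .next a => [.or (nxv (.next a)) (.next (xv a))] ++ ucs a
  | .unt a b =>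
      [.or (nxv (.unt a b)) (.or (xv b) (.and (xv a) (.next (xv (.unt a b))))),
       .or (nxv (.unt a b)) (LTL.F (xv b))] ++ ucs a ++ ucs b
  | .wunt a b =>
      [.or (nxv (.wunt a b)) (.or (xv b) (.and (xv a) (.next (xv (.wunt a b)))))]
      ++ ucs a ++ ucs b

/-- `f' = x_f ∧ ⋀_{f'' ∈ UCS} G(f'')`. -/
def snf {P : Type} (f : LTL P) : LTL (P ⊕ LTL P) :=
  .and (xv f) (bigAnd ((ucs f).map LTL.G))

section Aux
variable {P Q : Type}

lemma sat_G (M : ℕ → Set Q) (a : LTL Q) (i : ℕ) :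
    Sat M (LTL.G a) i ↔ ∀ j, i ≤ j → Sat M a j := by
  simp [LTL.G, Sat]

lemma sat_F (M : ℕ → Set Q) (a : LTL Q) (i : ℕ) :
    Sat M (LTL.F a) i ↔ ∃ j, i ≤ j ∧ Sat M a j := by
  simp [LTL.F, Sat]

lemma sat_bigAnd (M : ℕ → Set Q) (l : List (LTL Q)) (i : ℕ) :
    Sat M (bigAnd l) i ↔ ∀ c ∈ l, Sat M c i := by
  induction l with
  | nil => simp [bigAnd, Sat]
  | cons c l ih =>
      simp only [bigAnd, List.foldr] at ih ⊢
      simp [Sat, ih]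

lemma unt_unfold {M : ℕ → Set Q} {a b : LTL Q} {i : ℕ}
    (h : Sat M (.unt a b) i) :
    Sat M b i ∨ (Sat M a i ∧ Sat M (.unt a b) (i + 1)) := by
  obtain ⟨j, hij, hb, ha⟩ := h
  rcases eq_or_lt_of_le hij with rfl | hlt
  · exact Or.inl hb
  · exact Or.inr ⟨ha i le_rfl hlt,
      ⟨j, hlt, hb, fun k hk hk' => ha k (by omega) hk'⟩⟩

lemma wunt_unfold {M : ℕ → Set Q} {a b : LTL Q} {i : ℕ}
    (h : Sat M (.wunt a b) i) :
    Sat M b i ∨ (Sat M a i ∧ Sat M (.wunt a b) (i + 1)) := by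
  rcases h with h | ⟨j, hij, hb, ha⟩
  · exact Or.inr ⟨h i le_rfl, Or.inl fun j hj => h j (by omega)⟩
  · rcases eq_or_lt_of_le hij with rfl | hlt
    · exact Or.inl hb
    · exact Or.inr ⟨ha i le_rfl hlt,
        Or.inr ⟨j, hlt, hb, fun k hk hk' => ha k (by omega) hk'⟩⟩

/-- Model for forward direction. -/
def Mx (M : ℕ → Set P) : ℕ → Set (P ⊕ LTL P) :=
  fun i => {x | Sum.elim (· ∈ M i) (fun g => Sat M g i) x}

lemma mem_Mx_inr (M : ℕ → Set P) (g : LTL P) (i : ℕ) :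
    (Sum.inr g ∈ Mx M i) ↔ Sat M g i := Iff.rfl

lemma mem_Mx_inl (M : ℕ → Set P) (p : P) (i : ℕ) :
    (Sum.inl p ∈ Mx M i) ↔ p ∈ M i := Iff.rfl

lemma fwd_main (M : ℕ → Set P) :
    ∀ g : LTL P, ∀ c ∈ ucs g, ∀ i, Sat (Mx M) c i := by
  intro g
  induction g with
  | tt =>
      intro c hc i
      simp only [ucs, List.mem_singleton] at hc
      subst hc
      exact Or.inr trivial
  | ff =>
      intro c hc i
      simp only [ucs, List.mem_singleton] at hc
      subst hc
      exact Or.inl (fun h => h)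
  | var p =>
      intro c hc i
      simp only [ucs, List.mem_singleton] at hc
      subst hc
      by_cases h : Sat M (.var p) i
      · exact Or.inr h
      · exact Or.inl h
  | nvar p =>
      intro c hc i
      simp only [ucs, List.mem_singleton] at hc
      subst hc
      by_cases h : Sat M (.nvar p) i
      · exact Or.inr h
      · exact Or.inl h
  | and a b iha ihb =>
      intro c hc i
      simp only [ucs, List.mem_append, List.mem_cons, List.mem_singleton,
        List.not_mem_nil, or_false] at hc
      rcases hc with ((rfl | rfl) | hc) | hc
      · by_cases h : Sat M (.and a b) i
        · exact Or.inr h.1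
        · exact Or.inl h
      · by_cases h : Sat M (.and a b) i
        · exact Or.inr h.2
        · exact Or.inl h
      · exact iha c hc i
      · exact ihb c hc i
  | or a b iha ihb =>
      intro c hc i
      simp only [ucs, List.mem_append, List.mem_cons, List.mem_singleton,
        List.not_mem_nil, or_false] at hc
      rcases hc with (rfl | hc) | hc
      · by_cases h : Sat M (.or a b) i
        · exact Or.inr h
        · exact Or.inl h
      · exact iha c hc i
      · exact ihb c hc i
  | next a iha =>
      intro c hc i
      simp only [ucs, List.mem_append, List.mem_cons, List.mem_singleton,
        List.not_mem_nil, or_false] at hc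
      rcases hc with rfl | hc
      · by_cases h : Sat M (.next a) i
        · exact Or.inr h
        · exact Or.inl h
      · exact iha c hc i
  | unt a b iha ihb =>
      intro c hc i
      simp only [ucs, List.mem_append, List.mem_cons, List.mem_singleton,
        List.not_mem_nil, or_false] at hc
      rcases hc with ((rfl | rfl) | hc) | hc
      · by_cases h : Sat M (.unt a b) i
        · rcases unt_unfold h with hb | ⟨ha, hn⟩
          · exact Or.inr (Or.inl hb)
          · exact Or.inr (Or.inr ⟨ha, hn⟩)
        · exact Or.inl h
      · by_cases h : Sat M (.unt a b) i
        · refine Or.inr ?_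
          rw [sat_F]
          obtain ⟨j, hij, hb, -⟩ := h
          exact ⟨j, hij, hb⟩
        · exact Or.inl h
      · exact iha c hc i
      · exact ihb c hc i
  | wunt a b iha ihb =>
      intro c hc i
      simp only [ucs, List.mem_append, List.mem_cons, List.mem_singleton,
        List.not_mem_nil, or_false] at hc
      rcases hc with (rfl | hc) | hc
      · by_cases h : Sat M (.wunt a b) i
        · rcases wunt_unfold h with hb | ⟨ha, hn⟩
          · exact Or.inr (Or.inl hb)
          · exact Or.inr (Or.inr ⟨ha, hn⟩)
        · exact Or.inl h
      · exact iha c hc i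
      · exact ihb c hc i

lemma propagate {X A B : ℕ → Prop}
    (h : ∀ m, X m → B m ∨ (A m ∧ X (m + 1))) {i : ℕ} (hx : X i) :
    ∀ d, (∀ m, i ≤ m → m < i + d → ¬ B m) →
      X (i + d) ∧ ∀ m, i ≤ m → m < i + d → A m := by
  intro d
  induction d with
  | zero => exact fun _ => ⟨hx, fun m hm hm' => absurd hm' (by omega)⟩
  | succ d ih =>
      intro hnb
      obtain ⟨hxd, ha⟩ := ih (fun m hm hm' => hnb m hm (by omega))
      rcases h _ hxd with hb | ⟨haA, hX⟩
      · exact absurd hb (hnb _ (by omega) (by omega))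
      · refine ⟨hX, fun m hm hm' => ?_⟩
        rcases lt_or_ge m (i + d) with h' | h'
        · exact ha m hm h'
        · have : m = i + d := by omega
          subst this; exact haA

lemma bwd_main {P : Type} (M' : ℕ → Set (P ⊕ LTL P)) :
    ∀ g : LTL P, (∀ c ∈ ucs g, ∀ i, Sat M' c i) →
      ∀ i, Sum.inr g ∈ M' i →
        Sat (fun n => {p | Sum.inl p ∈ M' n}) g i := by
  intro g
  induction g with
  | tt => intro _ i _; trivial
  | ff =>
      intro hc i hx
      rcases hc _ (List.mem_singleton.mpr rfl) i with h | h
      · exact h hx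
      · exact h
  | var p =>
      intro hc i hx
      rcases hc _ (List.mem_singleton.mpr rfl) i with h | h
      · exact absurd hx h
      · exact h
  | nvar p =>
      intro hc i hx
      rcases hc _ (List.mem_singleton.mpr rfl) i with h | h
      · exact absurd hx h
      · exact h
  | and a b iha ihb =>
      intro hc i hx
      have hca : ∀ c ∈ ucs a, ∀ i, Sat M' c i := fun c h =>
        hc c (by simp only [ucs, List.mem_append, List.mem_cons]; tauto)
      have hcb : ∀ c ∈ ucs b, ∀ i, Sat M' c i := fun c h =>
        hc c (by simp only [ucs, List.mem_append, List.mem_cons]; tauto)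
      have h1 : Sat M' (.or (nxv (.and a b)) (xv a)) i :=
        hc _ (by simp [ucs]) i
      have h2 : Sat M' (.or (nxv (.and a b)) (xv b)) i :=
        hc _ (by simp [ucs]) i
      have ha : Sum.inr a ∈ M' i := by
        rcases h1 with h | h
        · exact absurd hx h
        · exact h
      have hb : Sum.inr b ∈ M' i := by
        rcases h2 with h | h
        · exact absurd hx h
        · exact h
      exact ⟨iha hca i ha, ihb hcb i hb⟩
  | or a b iha ihb =>
      intro hc i hx
      have hca : ∀ c ∈ ucs a, ∀ i, Sat M' c i := fun c h =>
        hc c (by simp only [ucs, List.mem_append, List.mem_cons]; tauto)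
      have hcb : ∀ c ∈ ucs b, ∀ i, Sat M' c i := fun c h =>
        hc c (by simp only [ucs, List.mem_append, List.mem_cons]; tauto)
      have h1 : Sat M' (.or (nxv (.or a b)) (.or (xv a) (xv b))) i :=
        hc _ (by simp [ucs]) i
      rcases h1 with h | h | h
      · exact absurd hx h
      · exact Or.inl (iha hca i h)
      · exact Or.inr (ihb hcb i h)
  | next a iha =>
      intro hc i hx
      have hca : ∀ c ∈ ucs a, ∀ i, Sat M' c i := fun c h =>
        hc c (by simp only [ucs, List.mem_append, List.mem_cons]; tauto)
      have h1 : Sat M' (.or (nxv (.next a)) (.next (xv a))) i :=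
        hc _ (by simp [ucs]) i
      rcases h1 with h | h
      · exact absurd hx h
      · exact iha hca (i + 1) h
  | unt a b iha ihb =>
      intro hc i hx
      have hca : ∀ c ∈ ucs a, ∀ i, Sat M' c i := fun c h =>
        hc c (by simp only [ucs, List.mem_append, List.mem_cons]; tauto)
      have hcb : ∀ c ∈ ucs b, ∀ i, Sat M' c i := fun c h =>
        hc c (by simp only [ucs, List.mem_append, List.mem_cons]; tauto)
      have step : ∀ m, Sum.inr (LTL.unt a b) ∈ M' m →
          (Sum.inr b ∈ M' m) ∨ ((Sum.inr a ∈ M' m) ∧ Sum.inr (LTL.unt a b) ∈ M' (m + 1)) := by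
        intro m hm
        have h1 : Sat M' (.or (nxv (.unt a b))
            (.or (xv b) (.and (xv a) (.next (xv (.unt a b)))))) m :=
          hc _ (by simp [ucs]) m
        rcases h1 with h | h | h
        · exact absurd hm h
        · exact Or.inl h
        · exact Or.inr h
      have hF : Sat M' (.or (nxv (.unt a b)) (LTL.F (xv b))) i :=
        hc _ (by simp [ucs]) i
      have hex : ∃ j, i ≤ j ∧ Sum.inr b ∈ M' j := by
        rcases hF with h | h
        · exact absurd hx h
        · rw [sat_F] at h; exact h
      classical
      obtain ⟨hij, hbj⟩ := Nat.find_spec hex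
      set j := Nat.find hex with hjdef
      have hnb : ∀ m, i ≤ m → m < i + (j - i) → ¬ (Sum.inr b ∈ M' m) := by
        intro m hm hm' hbm
        exact Nat.find_min hex (by omega) ⟨hm, hbm⟩
      obtain ⟨-, haseg⟩ := propagate step hx (j - i) hnb
      refine ⟨j, hij, ihb hcb j hbj, fun k hk hk' => iha hca k (haseg k hk (by omega))⟩
  | wunt a b iha ihb =>
      intro hc i hx
      have hca : ∀ c ∈ ucs a, ∀ i, Sat M' c i := fun c h =>
        hc c (by simp only [ucs, List.mem_append, List.mem_cons]; tauto)
      have hcb : ∀ c ∈ ucs b, ∀ i, Sat M' c i := fun c h =>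
        hc c (by simp only [ucs, List.mem_append, List.mem_cons]; tauto)
      have step : ∀ m, Sum.inr (LTL.wunt a b) ∈ M' m →
          (Sum.inr b ∈ M' m) ∨ ((Sum.inr a ∈ M' m) ∧ Sum.inr (LTL.wunt a b) ∈ M' (m + 1)) := by
        intro m hm
        have h1 : Sat M' (.or (nxv (.wunt a b))
            (.or (xv b) (.and (xv a) (.next (xv (.wunt a b)))))) m :=
          hc _ (by simp [ucs]) m
        rcases h1 with h | h | h
        · exact absurd hm h
        · exact Or.inl h
        · exact Or.inr h
      classical
      by_cases hex : ∃ j, i ≤ j ∧ Sum.inr b ∈ M' j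
      · obtain ⟨hij, hbj⟩ := Nat.find_spec hex
        set j := Nat.find hex with hjdef
        have hnb : ∀ m, i ≤ m → m < i + (j - i) → ¬ (Sum.inr b ∈ M' m) := by
          intro m hm hm' hbm
          exact Nat.find_min hex (by omega) ⟨hm, hbm⟩
        obtain ⟨-, haseg⟩ := propagate step hx (j - i) hnb
        exact Or.inr ⟨j, hij, ihb hcb j hbj,
          fun k hk hk' => iha hca k (haseg k hk (by omega))⟩
      · push_neg at hex
        refine Or.inl fun j hj => ?_
        have hnb : ∀ m, i ≤ m → m < i + (j + 1 - i) → ¬ (Sum.inr b ∈ M' m) := by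
          intro m hm _ hbm
          exact hex m hm hbm
        obtain ⟨-, haseg⟩ := propagate step hx (j + 1 - i) hnb
        exact iha hca j (haseg j hj (by omega))

end Aux

/-- Every LTL formula is equisatisfiable with its definitional SNF. -/
theorem stmt8 {P : Type} (f : LTL P) :
    (∃ M : ℕ → Set P, Sat M f 0) ↔ (∃ M' : ℕ → Set (P ⊕ LTL P), Sat M' (snf f) 0) := by
  constructor
  · rintro ⟨M, hM⟩
    refine ⟨Mx M, hM, ?_⟩
    rw [sat_bigAnd]
    intro c hc
    simp only [List.mem_map] at hc
    obtain ⟨c', hc', rfl⟩ := hc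
    rw [sat_G]
    intro j _
    exact fwd_main M f c' hc' j
  · rintro ⟨M', hxf, hcl⟩
    rw [sat_bigAnd] at hcl
    have hc : ∀ c ∈ ucs f, ∀ i, Sat M' c i := by
      intro c hcmem i
      have := hcl (LTL.G c) (List.mem_map.mpr ⟨c, hcmem, rfl⟩)
      rw [sat_G] at this
      exact this i (Nat.zero_le i)
    exact ⟨_, bwd_main M' f hc 0 hxf⟩
end
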